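/- Let H ≤ PL₊(I) be a group with no transition chains of length two, and let h, k ∈ H satisfy the mutual efficiency condition. Set f = [[h,k],k]. Then every orbital of h properly contained in an orbital of k is an orbital of f, and every orbital of f is properly contained in an orbital of k that contains an orbital of h. -/

import Mathlib

/-- The support of a map of the line: points it moves. -/
def Supp (f : ℝ → ℝ) : Set ℝ := {x | f x ≠ x}

/-- `A` is an orbital of `f`: a connected component of the support of `f`. -/
def IsOrbital (f : ℝ → ℝ) (A : Set ℝ) : Prop :=
  ∃ x ∈ Supp f, A = connectedComponentIn (Supp f) x

/-- An orientation-preserving homeomorphism of `[0,1]`, encoded as a strictly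
increasing bijection of `ℝ` fixing every point outside `(0,1)`. -/
def Homeo01 (f : Equiv.Perm ℝ) : Prop :=
  StrictMono f ∧ ∀ x ∉ Set.Ioo (0:ℝ) 1, f x = x

/-- `f` is affine in a neighbourhood of `x`. -/
def LocallyAffineAt (f : ℝ → ℝ) (x : ℝ) : Prop :=
  ∃ ε > 0, ∃ m b : ℝ, ∀ y : ℝ, |y - x| < ε → f y = m * y + b

/-- Piecewise linear with finitely many breakpoints. -/
def IsPL (f : ℝ → ℝ) : Prop := {x | ¬ LocallyAffineAt f x}.Finite

/-- Membership in `PL₊(I)`. -/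
def PLHomeo (f : Equiv.Perm ℝ) : Prop := Homeo01 f ∧ IsPL f

/-- Support of the action of a subgroup. -/
def GSupp (G : Subgroup (Equiv.Perm ℝ)) : Set ℝ := {x | ∃ g ∈ G, g x ≠ x}

/-- An orbital of a subgroup: a component of the support of its action. -/
def IsGroupOrbital (G : Subgroup (Equiv.Perm ℝ)) (A : Set ℝ) : Prop :=
  ∃ x ∈ GSupp G, A = connectedComponentIn (GSupp G) x

/-- `b` is a breakpoint of `f`: one-sided derivatives exist but differ. -/
def Breakpoint (f : ℝ → ℝ) (b : ℝ) : Prop :=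
  b ∈ Set.Ioo (0:ℝ) 1 ∧
  DifferentiableWithinAt ℝ f (Set.Iio b) b ∧
  DifferentiableWithinAt ℝ f (Set.Ioi b) b ∧
  derivWithin f (Set.Iio b) b ≠ derivWithin f (Set.Ioi b) b

/-- `G` admits a transition chain of length two. -/
def HasTransitionChain2 (G : Subgroup (Equiv.Perm ℝ)) : Prop :=
  ∃ g ∈ G, ∃ h ∈ G, ∃ a₁ b₁ a₂ b₂ : ℝ,
    IsOrbital g (Set.Ioo a₁ a₂) ∧ IsOrbital h (Set.Ioo b₁ b₂) ∧
    a₁ < b₁ ∧ b₁ < a₂ ∧ a₂ < b₂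

/-- A tower of the subgroup `G`: a set of signed orbitals `(A, g)` whose orbitals
form a chain under inclusion, with exactly one signature per orbital. -/
def IsTower (G : Subgroup (Equiv.Perm ℝ)) (T : Set (Set ℝ × Equiv.Perm ℝ)) : Prop :=
  (∀ p ∈ T, p.2 ∈ G ∧ IsOrbital p.2 p.1) ∧
  (∀ p ∈ T, ∀ q ∈ T, p.1 ⊆ q.1 ∨ q.1 ⊆ p.1) ∧
  (∀ p ∈ T, ∀ q ∈ T, p.1 = q.1 → p = q)

/-- The depth of `G` equals `n`: there is a tower of height `n` and every tower
is finite with height at most `n`. -/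
def DepthEq (G : Subgroup (Equiv.Perm ℝ)) (n : ℕ) : Prop :=
  (∃ T, IsTower G T ∧ T.Finite ∧ T.ncard = n) ∧
  ∀ T, IsTower G T → T.Finite ∧ T.ncard ≤ n

/-- The mutual efficiency condition. -/
def MutualEff (h k : Equiv.Perm ℝ) : Prop :=
  (∀ C : Set ℝ, IsOrbital ⇑h C → (∃ A, IsOrbital ⇑k A ∧ A ⊂ C) →
    ∃ x ∈ C, Supp ⇑k ∩ C ⊆ Set.uIcc x (h x)) ∧
  (∀ D : Set ℝ, IsOrbital ⇑k D → (∃ A, IsOrbital ⇑h A ∧ A ⊂ D) →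
    ∃ x ∈ D, Supp ⇑h ∩ D ⊆ Set.uIcc x (k x))


open scoped commutatorElement

theorem Equiv.Perm.apply_inv_self {α : Type*} (f : Equiv.Perm α) (x : α) : f (f⁻¹ x) = x :=
  f.apply_symm_apply x

theorem Equiv.Perm.inv_apply_self {α : Type*} (f : Equiv.Perm α) (x : α) : f⁻¹ (f x) = x :=
  f.symm_apply_apply x

open Set

namespace Stmt16Aux

lemma fix_inv (g : Equiv.Perm ℝ) {y : ℝ} (h : g y = y) : g⁻¹ y = y := by
  conv_lhs => rw [← h]
  exact g.symm_apply_apply y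

lemma sm_inv (g : Equiv.Perm ℝ) (hg : StrictMono ⇑g) : StrictMono ⇑g⁻¹ := by
  intro a b hab
  rcases lt_trichotomy (g⁻¹ a) (g⁻¹ b) with h|h|h
  · exact h
  · exfalso
    have := congrArg g h
    simp at this
    exact absurd this (ne_of_lt hab)
  · exfalso
    have := hg h
    simp at this
    exact absurd hab (not_lt.2 this.le)

lemma cont_of_sm (g : Equiv.Perm ℝ) (hg : StrictMono ⇑g) : Continuous ⇑g :=
  (StrictMono.orderIsoOfSurjective ⇑g hg g.surjective).continuous

lemma supp_isOpen (g : Equiv.Perm ℝ) (hg : StrictMono ⇑g) : IsOpen (Supp ⇑g) := by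
  have : Supp ⇑g = {x | ⇑g x = x}ᶜ := by ext y; simp [Supp]
  rw [this]
  exact (isClosed_eq (cont_of_sm g hg) continuous_id).isOpen_compl

lemma supp_inv (g : Equiv.Perm ℝ) : Supp ⇑g⁻¹ = Supp ⇑g := by
  ext y
  simp only [Supp, mem_setOf_eq]
  constructor
  · intro hy hc; exact hy (fix_inv g hc)
  · intro hy hc
    have : g (g⁻¹ y) = g y := congrArg g hc
    simp at this; exact hy this.symm

lemma no_fix_between (g : Equiv.Perm ℝ) (hg : StrictMono ⇑g) {a : ℝ} (ha : g a ≠ a) :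
    ∀ z ∈ Icc (min a (g a)) (max a (g a)), g z ≠ z := by
  rcases ha.lt_or_gt with h1|h1
  · intro z hz hc
    rw [min_eq_right h1.le, max_eq_left h1.le] at hz
    rcases eq_or_lt_of_le hz.2 with h2|h2
    · exact ha (h2 ▸ hc)
    · have : g z < g a := hg h2
      rw [hc] at this
      exact absurd hz.1 (not_le.2 this)
  · intro z hz hc
    rw [min_eq_left h1.le, max_eq_right h1.le] at hz
    rcases eq_or_lt_of_le hz.1 with h2|h2
    · apply ha
      rw [← h2] at hc
      exact hc
    · have : g a < g z := hg h2
      rw [hc] at this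
      exact absurd hz.2 (not_le.2 this)

end Stmt16Aux

namespace Stmt16Aux

lemma supp_sub (g : Equiv.Perm ℝ) (hout : ∀ x ∉ Set.Ioo (0:ℝ) 1, g x = x) :
    Supp ⇑g ⊆ Set.Ioo (0:ℝ) 1 := by
  intro y hy
  by_contra hc
  exact hy (hout y hc)

lemma orbital_mem (g : Equiv.Perm ℝ) {y : ℝ} (hy : y ∈ Supp ⇑g) :
    IsOrbital ⇑g (connectedComponentIn (Supp ⇑g) y) ∧ y ∈ connectedComponentIn (Supp ⇑g) y :=
  ⟨⟨y, hy, rfl⟩, mem_connectedComponentIn hy⟩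

lemma orbital_unique {g : Equiv.Perm ℝ} {A A' : Set ℝ} (hA : IsOrbital ⇑g A)
    (hA' : IsOrbital ⇑g A') {y : ℝ} (hy : y ∈ A) (hy' : y ∈ A') : A = A' := by
  obtain ⟨x, hx, rfl⟩ := hA
  obtain ⟨x', hx', rfl⟩ := hA'
  rw [connectedComponentIn_eq hy, connectedComponentIn_eq hy']

/-- open bounded preconnected nonempty subsets of ℝ are open intervals -/
lemma eq_Ioo {A : Set ℝ} (hopen : IsOpen A) (hpc : IsPreconnected A) {x0 : ℝ}
    (hx0A : x0 ∈ A) (hbdd : A ⊆ Set.Ioo 0 1) :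
    A = Set.Ioo (sInf A) (sSup A) ∧ sInf A ∉ A ∧ sSup A ∉ A := by
  have hBb : BddBelow A := ⟨0, fun y hy => (hbdd hy).1.le⟩
  have hBa : BddAbove A := ⟨1, fun y hy => (hbdd hy).2.le⟩
  have hInf : sInf A ∉ A := by
    intro hc
    obtain ⟨ε, hε, hball⟩ := Metric.isOpen_iff.1 hopen _ hc
    have h1 : sInf A - ε/2 ∈ A := by
      apply hball
      rw [Metric.mem_ball, Real.dist_eq,
        show sInf A - ε/2 - sInf A = -(ε/2) by ring, abs_neg, abs_of_pos (by linarith)]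
      linarith
    have := csInf_le hBb h1
    linarith
  have hSup : sSup A ∉ A := by
    intro hc
    obtain ⟨ε, hε, hball⟩ := Metric.isOpen_iff.1 hopen _ hc
    have h1 : sSup A + ε/2 ∈ A := by
      apply hball
      rw [Metric.mem_ball, Real.dist_eq,
        show sSup A + ε/2 - sSup A = ε/2 by ring, abs_of_pos (by linarith)]
      linarith
    have := le_csSup hBa h1
    linarith
  refine ⟨Set.Subset.antisymm ?_ ?_, hInf, hSup⟩
  · intro z hz
    rcases eq_or_lt_of_le (csInf_le hBb hz) with h1|h1
    · exact absurd (h1 ▸ hz) hInf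
    rcases eq_or_lt_of_le (le_csSup hBa hz) with h2|h2
    · exact absurd (h2.symm ▸ hz) hSup
    exact ⟨h1, h2⟩
  · intro z hz
    obtain ⟨w, hwA, hw⟩ := exists_lt_of_csInf_lt ⟨x0, hx0A⟩ hz.1
    obtain ⟨w', hw'A, hw'⟩ := exists_lt_of_lt_csSup ⟨x0, hx0A⟩ hz.2
    exact hpc.ordConnected.out hwA hw'A ⟨hw.le, hw'.le⟩

/-- main structure lemma for orbitals -/
lemma orbital_structure (g : Equiv.Perm ℝ) (hg : StrictMono ⇑g)
    (hout : ∀ x ∉ Set.Ioo (0:ℝ) 1, g x = x) {A : Set ℝ} (hA : IsOrbital ⇑g A) :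
    ∃ a b : ℝ, a < b ∧ A = Set.Ioo a b ∧ g a = a ∧ g b = b ∧
      (∀ y ∈ A, g y ≠ y) ∧ (∀ y ∈ A, g y ∈ A ∧ g⁻¹ y ∈ A) := by
  obtain ⟨x0, hx0, rfl⟩ := hA
  set A := connectedComponentIn (Supp ⇑g) x0 with hAdef
  have hpc : IsPreconnected A := isPreconnected_connectedComponentIn
  have hopen : IsOpen A := (supp_isOpen g hg).connectedComponentIn
  have hsub : A ⊆ Supp ⇑g := connectedComponentIn_subset _ _
  have hx0A : x0 ∈ A := mem_connectedComponentIn hx0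
  have hbdd : A ⊆ Set.Ioo (0:ℝ) 1 := hsub.trans (supp_sub g hout)
  obtain ⟨hIoo, haA, hbA⟩ := eq_Ioo hopen hpc hx0A hbdd
  set a := sInf A
  set b := sSup A
  have hx0Ioo : x0 ∈ Set.Ioo a b := by rw [← hIoo]; exact hx0A
  have hab : a < b := lt_trans hx0Ioo.1 hx0Ioo.2
  refine ⟨a, b, hab, hIoo, ?_, ?_, ?_, ?_⟩
  · by_contra hc
    have hmem : a ∈ Supp ⇑g := hc
    have hsub2 : Set.Ico a b ⊆ Supp ⇑g := by
      intro z hz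
      rcases eq_or_lt_of_le hz.1 with h1|h1
      · exact h1 ▸ hmem
      · apply hsub; rw [hIoo]; exact ⟨h1, hz.2⟩
    have h3 : Set.Ico a b ⊆ A :=
      isPreconnected_Ico.subset_connectedComponentIn ⟨hx0Ioo.1.le, hx0Ioo.2⟩ hsub2
    exact haA (h3 ⟨le_refl _, hab⟩)
  · by_contra hc
    have hmem : b ∈ Supp ⇑g := hc
    have hsub2 : Set.Ioc a b ⊆ Supp ⇑g := by
      intro z hz
      rcases eq_or_lt_of_le hz.2 with h1|h1
      · exact h1 ▸ hmem
      · apply hsub; rw [hIoo]; exact ⟨hz.1, h1⟩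
    have h3 : Set.Ioc a b ⊆ A :=
      isPreconnected_Ioc.subset_connectedComponentIn ⟨hx0Ioo.1, hx0Ioo.2.le⟩ hsub2
    exact hbA (h3 ⟨hab, le_refl _⟩)
  · intro y hy; exact hsub hy
  · intro y hy
    rw [hIoo] at hy ⊢
    have hyA : y ∈ A := by rw [hIoo]; exact hy
    have hyS : y ∈ Supp ⇑g := hsub hyA
    have hicc : Set.Icc (min y (g y)) (max y (g y)) ⊆ Supp ⇑g :=
      fun z hz => no_fix_between g hg hyS z hz
    have hcomp : connectedComponentIn (Supp ⇑g) y = A := (connectedComponentIn_eq hyA).symm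
    have h1 : Set.Icc (min y (g y)) (max y (g y)) ⊆ A := by
      rw [← hcomp]
      exact isPreconnected_Icc.subset_connectedComponentIn
        (Set.mem_Icc.2 ⟨min_le_left _ _, le_max_left _ _⟩) hicc
    constructor
    · have h3 := h1 (Set.mem_Icc.2 ⟨min_le_right _ _, le_max_right _ _⟩)
      rw [hIoo] at h3; exact h3
    · have hne : g⁻¹ y ≠ y := by
        intro hc
        have := congrArg (⇑g) hc
        simp at this
        exact hyS this.symm
      have hmov : g (g⁻¹ y) ≠ g⁻¹ y := by
        simpa using (Ne.symm hne)
      have hicc2 : Set.Icc (min (g⁻¹ y) (g (g⁻¹ y))) (max (g⁻¹ y) (g (g⁻¹ y))) ⊆ Supp ⇑g :=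
        fun z hz => no_fix_between g hg hmov z hz
      have h2 : Set.Icc (min (g⁻¹ y) (g (g⁻¹ y))) (max (g⁻¹ y) (g (g⁻¹ y))) ⊆ A := by
        rw [← hcomp]
        apply isPreconnected_Icc.subset_connectedComponentIn _ hicc2
        simp only [Equiv.Perm.apply_inv_self]
        exact Set.mem_Icc.2 ⟨min_le_right _ _, le_max_right _ _⟩
      have h3 := h2 (Set.mem_Icc.2 ⟨min_le_left _ _, le_max_left _ _⟩)
      rw [hIoo] at h3; exact h3

end Stmt16Aux

namespace Stmt16Aux

/-- points of an open interval inside Icc u v are strictly between u and v -/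
lemma open_sub_Icc {α β u v : ℝ} (hsub : Set.Ioo α β ⊆ Set.Icc u v) :
    ∀ y ∈ Set.Ioo α β, u < y ∧ y < v := by
  intro y hy
  constructor
  · rcases eq_or_lt_of_le (hsub hy).1 with h1|h1
    · exfalso
      set w := (max α (u-1) + u)/2 with hw
      have h2 : max α (u-1) < u := by
        rcases max_cases α (u-1) with ⟨he, _⟩|⟨he, _⟩ <;> rw [he]
        · rw [h1]; exact hy.1
        · linarith
      have h3 : w ∈ Set.Ioo α β := by
        constructor
        · have : α ≤ max α (u-1) := le_max_left _ _
          rw [hw]; linarith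
        · have : w < u := by rw [hw]; linarith
          rw [h1] at this
          exact lt_trans this hy.2
      have := (hsub h3).1
      have : w < u := by rw [hw]; linarith
      linarith [(hsub h3).1]
    · exact h1
  · rcases eq_or_lt_of_le (hsub hy).2 with h1|h1
    · exfalso
      set w := (v + min β (v+1))/2 with hw
      have h2 : v < min β (v+1) := by
        rcases min_cases β (v+1) with ⟨he, _⟩|⟨he, _⟩ <;> rw [he]
        · rw [← h1]; exact hy.2
        · linarith
      have h3 : w ∈ Set.Ioo α β := by
        constructor
        · have : v < w := by rw [hw]; linarith
          rw [← h1] at this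
          exact lt_trans hy.1 this
        · have : min β (v+1) ≤ β := min_le_left _ _
          rw [hw]; linarith
      have : v < w := by rw [hw]; linarith
      linarith [(hsub h3).2]
    · exact h1

/-- an ordConnected set containing a point of Ioo c₁ c₂ but neither endpoint is inside -/
lemma interval_confine {B : Set ℝ} (hB : B.OrdConnected) {y0 c₁ c₂ : ℝ}
    (hy0B : y0 ∈ B) (hy0 : y0 ∈ Set.Ioo c₁ c₂) (h1 : c₁ ∉ B) (h2 : c₂ ∉ B) :
    B ⊆ Set.Ioo c₁ c₂ := by
  intro z hz
  constructor
  · by_contra hc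
    push_neg at hc
    exact h1 (hB.out hz hy0B ⟨hc, hy0.1.le⟩)
  · by_contra hc
    push_neg at hc
    exact h2 (hB.out hy0B hz ⟨hy0.2.le, hc⟩)

end Stmt16Aux
namespace Stmt16Aux

lemma nested (H : Subgroup (Equiv.Perm ℝ)) (hH : ∀ g ∈ H, PLHomeo g)
    (hnc : ¬ HasTransitionChain2 H) {p q : Equiv.Perm ℝ} (hp : p ∈ H) (hq : q ∈ H)
    {A C : Set ℝ} (hA : IsOrbital ⇑p A) (hC : IsOrbital ⇑q C)
    (hint : (A ∩ C).Nonempty) : A ⊆ C ∨ C ⊆ A := by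
  obtain ⟨hps, hpo⟩ := (hH p hp).1
  obtain ⟨hqs, hqo⟩ := (hH q hq).1
  obtain ⟨a₁, a₂, ha12, hAeq, -, -, -, -⟩ := orbital_structure p hps hpo hA
  obtain ⟨c₁, c₂, hc12, hCeq, -, -, -, -⟩ := orbital_structure q hqs hqo hC
  obtain ⟨y, hyA, hyC⟩ := hint
  rw [hAeq] at hyA ⊢
  rw [hCeq] at hyC ⊢
  rcases lt_trichotomy a₁ c₁ with h1|h1|h1
  · right
    apply Set.Ioo_subset_Ioo h1.le
    by_contra hc
    push_neg at hc
    exact hnc ⟨p, hp, q, hq, a₁, c₁, a₂, c₂, hAeq ▸ hA, hCeq ▸ hC, h1,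
      lt_trans hyC.1 hyA.2, hc⟩
  · rcases le_total a₂ c₂ with h2|h2
    · left; rw [h1]; exact Set.Ioo_subset_Ioo (le_refl _) h2
    · right; rw [← h1]; exact Set.Ioo_subset_Ioo (le_refl _) h2
  · left
    apply Set.Ioo_subset_Ioo h1.le
    by_contra hc
    push_neg at hc
    exact hnc ⟨q, hq, p, hp, c₁, a₁, c₂, a₂, hCeq ▸ hC, hAeq ▸ hA, h1,
      lt_trans hyA.1 hyC.2, hc⟩

lemma setup (p q : Equiv.Perm ℝ) (hps : StrictMono ⇑p) (hpo : ∀ x ∉ Set.Ioo (0:ℝ) 1, p x = x)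
    (hqs : StrictMono ⇑q) (hqo : ∀ x ∉ Set.Ioo (0:ℝ) 1, q x = x)
    {C : Set ℝ} (hC : IsOrbital ⇑q C) {x : ℝ} (hxC : x ∈ C)
    (hS : Supp ⇑p ∩ C ⊆ Set.uIcc x (q x))
    (hnest : ∀ A', IsOrbital ⇑p A' → (A' ∩ C).Nonempty → A' ⊆ C ∨ C ⊆ A') :
    (∀ y ∈ C, y ∉ Set.Ioo (min x (q x)) (max x (q x)) → p y = y) ∧
    (∀ y ∈ C, y ∈ Set.Ioo (min x (q x)) (max x (q x)) →
      p y ∈ Set.Ioo (min x (q x)) (max x (q x)) ∧ p⁻¹ y ∈ Set.Ioo (min x (q x)) (max x (q x))) ∧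
    (∀ A', IsOrbital ⇑p A' → ¬ C ⊆ A') := by
  obtain ⟨c₁, c₂, hc12, hCeq, -, -, hCmov, hCinv⟩ := orbital_structure q hqs hqo hC
  have hqx : q x ∈ C := (hCinv x hxC).1
  set mn := min x (q x) with hmn
  set mx := max x (q x) with hmx
  have hS' : Supp ⇑p ∩ C ⊆ Set.Icc mn mx := by
    intro z hz
    have := hS hz
    rwa [Set.uIcc] at this
  have hmnC : mn ∈ C := by
    rcases min_cases x (q x) with ⟨he, -⟩|⟨he, -⟩ <;> rw [hmn, he] <;> assumption
  have hmxC : mx ∈ C := by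
    rcases max_cases x (q x) with ⟨he, -⟩|⟨he, -⟩ <;> rw [hmx, he] <;> assumption
  have hnotC : ∀ A', IsOrbital ⇑p A' → ¬ C ⊆ A' := by
    intro A' hA' hcon
    have hsubp : C ⊆ Supp ⇑p := by
      obtain ⟨z, hz, rfl⟩ := hA'
      exact hcon.trans (connectedComponentIn_subset _ _)
    have hmn12 : mn ∈ Set.Ioo c₁ c₂ := by rw [← hCeq]; exact hmnC
    set w := (c₁ + mn)/2 with hw
    have hwC : w ∈ C := by
      rw [hCeq]
      constructor
      · rw [hw]; linarith [hmn12.1]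
      · rw [hw]; linarith [hmn12.1, hmn12.2]
    have := (hS' ⟨hsubp hwC, hwC⟩).1
    rw [hw] at this
    linarith [hmn12.1]
  have hAll : ∀ y, y ∈ Supp ⇑p → y ∈ C →
      y ∈ Set.Ioo mn mx ∧ p y ∈ Set.Ioo mn mx ∧ p⁻¹ y ∈ Set.Ioo mn mx := by
    intro y hyS hyC
    obtain ⟨hA', hyA'⟩ := orbital_mem p hyS
    rcases hnest _ hA' ⟨y, hyA', hyC⟩ with hsub|hsub
    · obtain ⟨α, β, hαβ, hA'eq, -, -, -, hinv⟩ := orbital_structure p hps hpo hA'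
      have hA'sub : Set.Ioo α β ⊆ Set.Icc mn mx := by
        rw [← hA'eq]
        intro z hz
        exact hS' ⟨connectedComponentIn_subset _ _ hz, hsub hz⟩
      have hyIoo : y ∈ Set.Ioo α β := by rw [← hA'eq]; exact hyA'
      obtain ⟨hpy, hpy'⟩ := hinv y hyA'
      refine ⟨⟨(open_sub_Icc hA'sub y hyIoo).1, (open_sub_Icc hA'sub y hyIoo).2⟩, ?_, ?_⟩
      · have : p y ∈ Set.Ioo α β := by rw [← hA'eq]; exact hpy
        exact ⟨(open_sub_Icc hA'sub _ this).1, (open_sub_Icc hA'sub _ this).2⟩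
      · have : p⁻¹ y ∈ Set.Ioo α β := by rw [← hA'eq]; exact hpy'
        exact ⟨(open_sub_Icc hA'sub _ this).1, (open_sub_Icc hA'sub _ this).2⟩
    · exact absurd hsub (hnotC _ hA')
  refine ⟨?_, ?_, hnotC⟩
  · intro y hyC hyn
    by_contra hc
    exact hyn (hAll y hc hyC).1
  · intro y hyC hyI
    by_cases hc : p y = y
    · rw [hc]
      refine ⟨hyI, ?_⟩
      rw [fix_inv p hc]
      exact hyI
    · exact ⟨(hAll y hc hyC).2.1, (hAll y hc hyC).2.2⟩

end Stmt16Aux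
namespace Stmt16Aux

abbrev JJ (u v : ℝ) : Set ℝ := Set.Ioo (min u v) (max u v)

lemma JJ_mem {u v y : ℝ} : y ∈ JJ u v ↔ min u v < y ∧ y < max u v := Iff.rfl

lemma JJ_disj_of {u v u' v' : ℝ} (h : max u v ≤ min u' v' ∨ max u' v' ≤ min u v) :
    ∀ w ∈ JJ u v, w ∉ JJ u' v' := by
  intro w hw hc
  rw [JJ_mem] at hw hc
  rcases h with h|h <;> linarith [hw.1, hw.2, hc.1, hc.2]

lemma JJ_sub {C : Set ℝ} (hC : C.OrdConnected) {u v : ℝ} (hu : u ∈ C) (hv : v ∈ C) :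
    JJ u v ⊆ C := by
  intro w hw
  rw [JJ_mem] at hw
  have h1 : min u v ∈ C := by rcases min_cases u v with ⟨he,-⟩|⟨he,-⟩ <;> rw [he] <;> assumption
  have h2 : max u v ∈ C := by rcases max_cases u v with ⟨he,-⟩|⟨he,-⟩ <;> rw [he] <;> assumption
  exact hC.out h1 h2 ⟨hw.1.le, hw.2.le⟩

lemma mapJJ (q : Equiv.Perm ℝ) (hq : StrictMono ⇑q) (a b y : ℝ) :
    q y ∈ JJ (q a) (q b) ↔ y ∈ JJ a b := by
  rw [JJ_mem, JJ_mem, ← hq.monotone.map_min, ← hq.monotone.map_max, hq.lt_iff_lt, hq.lt_iff_lt]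

lemma mapJJ' (q : Equiv.Perm ℝ) (hq : StrictMono ⇑q) (a b y : ℝ) :
    y ∈ JJ (q a) (q b) ↔ q⁻¹ y ∈ JJ a b := by
  have := mapJJ q hq a b (q⁻¹ y)
  simpa using this

lemma g_apply (h k : Equiv.Perm ℝ) (y : ℝ) :
    (⁅h, k⁆ : Equiv.Perm ℝ) y = h (k (h⁻¹ (k⁻¹ y))) := by
  rw [commutatorElement_def]
  simp [Equiv.Perm.mul_apply]

lemma ginv_apply (h k : Equiv.Perm ℝ) (y : ℝ) :
    (⁅h, k⁆⁻¹ : Equiv.Perm ℝ) y = k (h (k⁻¹ (h⁻¹ y))) := by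
  rw [commutatorElement_def]
  simp [mul_inv_rev, Equiv.Perm.mul_apply]

lemma f_apply (h k : Equiv.Perm ℝ) (y : ℝ) :
    (⁅⁅h, k⁆, k⁆ : Equiv.Perm ℝ) y = ⁅h, k⁆ (k ((⁅h, k⁆⁻¹ : Equiv.Perm ℝ) (k⁻¹ y))) := by
  rw [commutatorElement_def ⁅h, k⁆ k]
  simp [Equiv.Perm.mul_apply]

lemma f_fix_of_fix (h k : Equiv.Perm ℝ) {y : ℝ} (h1 : h y = y) (h2 : k y = y) :
    (⁅⁅h, k⁆, k⁆ : Equiv.Perm ℝ) y = y := by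
  have h3 := fix_inv h h1
  have h4 := fix_inv k h2
  have hg : (⁅h, k⁆ : Equiv.Perm ℝ) y = y := by rw [g_apply, h4, h3, h2, h1]
  have hg' := fix_inv _ hg
  rw [f_apply, h4, hg', h2, hg]

end Stmt16Aux
namespace Stmt16Aux

lemma compA (h k : Equiv.Perm ℝ) (hks : StrictMono ⇑k) {C : Set ℝ} {x : ℝ}
    (hxC : x ∈ C)
    (hCinv : ∀ y ∈ C, k y ∈ C ∧ k⁻¹ y ∈ C)
    (hkmov : k x ≠ x)
    (hCord : C.OrdConnected)
    (hfix : ∀ y ∈ C, y ∉ JJ x (k x) → h y = y)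
    (hmap : ∀ y ∈ C, y ∈ JJ x (k x) → h y ∈ JJ x (k x) ∧ h⁻¹ y ∈ JJ x (k x)) :
    (∀ y ∈ C, y ∉ JJ x (k x) → y ∉ JJ (k x) (k (k x)) → y ∉ JJ (k (k x)) (k (k (k x))) →
      (⁅⁅h, k⁆, k⁆ : Equiv.Perm ℝ) y = y) ∧
    (∀ y ∈ C, y ∈ JJ x (k x) → (⁅⁅h, k⁆, k⁆ : Equiv.Perm ℝ) y = h y) ∧
    (x ∉ JJ (k x) (k (k x)) ∧ x ∉ JJ (k (k x)) (k (k (k x))) ∧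
      k x ∉ JJ (k x) (k (k x)) ∧ k x ∉ JJ (k (k x)) (k (k (k x)))) := by
  have hchain : (k⁻¹ x < x ∧ x < k x ∧ k x < k (k x) ∧ k (k x) < k (k (k x))) ∨
      (k (k (k x)) < k (k x) ∧ k (k x) < k x ∧ k x < x ∧ x < k⁻¹ x) := by
    rcases hkmov.lt_or_gt with h1|h1
    · right
      refine ⟨hks (hks h1), hks h1, h1, ?_⟩
      have h2 : k x < k (k⁻¹ x) := by simpa using h1
      exact hks.lt_iff_lt.1 h2
    · left
      refine ⟨?_, h1, hks h1, hks (hks h1)⟩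
      have h2 : k (k⁻¹ x) < k x := by simpa using h1
      exact hks.lt_iff_lt.1 h2
  -- disjointness facts
  have dJm0 : ∀ w ∈ JJ (k⁻¹ x) x, w ∉ JJ x (k x) := by
    apply JJ_disj_of
    rcases hchain with ⟨h1,h2,h3,h4⟩|⟨h1,h2,h3,h4⟩
    · left; rw [max_eq_right h1.le, min_eq_left h2.le]
    · right; rw [max_eq_left h3.le, min_eq_right h4.le]
  have dJm1 : ∀ w ∈ JJ (k⁻¹ x) x, w ∉ JJ (k x) (k (k x)) := by
    apply JJ_disj_of
    rcases hchain with ⟨h1,h2,h3,h4⟩|⟨h1,h2,h3,h4⟩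
    · left; rw [max_eq_right h1.le, min_eq_left h3.le]; linarith
    · right; rw [max_eq_left h2.le, min_eq_right h4.le]; linarith
  have d10 : ∀ w ∈ JJ (k x) (k (k x)), w ∉ JJ x (k x) := by
    apply JJ_disj_of
    rcases hchain with ⟨h1,h2,h3,h4⟩|⟨h1,h2,h3,h4⟩
    · right; rw [max_eq_right h2.le, min_eq_left h3.le]
    · left; rw [max_eq_left h2.le, min_eq_right h3.le]
  have d20 : ∀ w ∈ JJ (k (k x)) (k (k (k x))), w ∉ JJ x (k x) := by
    apply JJ_disj_of
    rcases hchain with ⟨h1,h2,h3,h4⟩|⟨h1,h2,h3,h4⟩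
    · right; rw [max_eq_right h2.le, min_eq_left h4.le]; linarith
    · left; rw [max_eq_left h1.le, min_eq_right h3.le]; linarith
  have d21 : ∀ w ∈ JJ (k (k x)) (k (k (k x))), w ∉ JJ (k x) (k (k x)) := by
    apply JJ_disj_of
    rcases hchain with ⟨h1,h2,h3,h4⟩|⟨h1,h2,h3,h4⟩
    · right; rw [max_eq_right h3.le, min_eq_left h4.le]
    · left; rw [max_eq_left h1.le, min_eq_right h2.le]
  -- endpoints not in J1, J2
  have ex1 : x ∉ JJ (k x) (k (k x)) := by
    intro hc
    rw [JJ_mem] at hc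
    rcases hchain with ⟨h1,h2,h3,h4⟩|⟨h1,h2,h3,h4⟩
    · rw [min_eq_left h3.le] at hc; linarith [hc.1]
    · rw [max_eq_left h2.le] at hc; linarith [hc.2]
  have ex2 : x ∉ JJ (k (k x)) (k (k (k x))) := by
    intro hc
    rw [JJ_mem] at hc
    rcases hchain with ⟨h1,h2,h3,h4⟩|⟨h1,h2,h3,h4⟩
    · rw [min_eq_left h4.le] at hc; linarith [hc.1]
    · rw [max_eq_left h1.le] at hc; linarith [hc.2]
  have ex3 : k x ∉ JJ (k x) (k (k x)) := by
    intro hc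
    rw [JJ_mem] at hc
    rcases hchain with ⟨h1,h2,h3,h4⟩|⟨h1,h2,h3,h4⟩
    · rw [min_eq_left h3.le] at hc; linarith [hc.1]
    · rw [max_eq_left h2.le] at hc; linarith [hc.2]
  have ex4 : k x ∉ JJ (k (k x)) (k (k (k x))) := by
    intro hc
    rw [JJ_mem] at hc
    rcases hchain with ⟨h1,h2,h3,h4⟩|⟨h1,h2,h3,h4⟩
    · rw [min_eq_left h4.le] at hc; linarith [hc.1]
    · rw [max_eq_left h1.le] at hc; linarith [hc.2]
  -- memberships in C
  have hkxC : k x ∈ C := (hCinv x hxC).1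
  have hkkxC : k (k x) ∈ C := (hCinv _ hkxC).1
  have hkkkxC : k (k (k x)) ∈ C := (hCinv _ hkkxC).1
  have hkixC : k⁻¹ x ∈ C := (hCinv x hxC).2
  have hJmC : JJ (k⁻¹ x) x ⊆ C := JJ_sub hCord hkixC hxC
  have hJ0C : JJ x (k x) ⊆ C := JJ_sub hCord hxC hkxC
  have hJ1C : JJ (k x) (k (k x)) ⊆ C := JJ_sub hCord hkxC hkkxC
  have hJ2C : JJ (k (k x)) (k (k (k x))) ⊆ C := JJ_sub hCord hkkxC hkkkxC
  -- mapping instances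
  have m0 : ∀ w, w ∈ JJ (k x) (k (k x)) ↔ k⁻¹ w ∈ JJ x (k x) := fun w => mapJJ' k hks x (k x) w
  have m1 : ∀ w, w ∈ JJ (k (k x)) (k (k (k x))) ↔ k⁻¹ w ∈ JJ (k x) (k (k x)) :=
    fun w => mapJJ' k hks (k x) (k (k x)) w
  have m2 : ∀ w, w ∈ JJ x (k x) ↔ k⁻¹ w ∈ JJ (k⁻¹ x) x := by
    intro w
    have := mapJJ' k hks (k⁻¹ x) x w
    simpa using this
  have m4 : ∀ w, w ∈ JJ x (k x) ↔ k w ∈ JJ (k x) (k (k x)) := fun w => (mapJJ k hks x (k x) w).symm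
  have hfix' : ∀ w ∈ C, w ∉ JJ x (k x) → h⁻¹ w = w := fun w hw h2 => fix_inv h (hfix w hw h2)
  -- commutator lemmas
  have ggfix : ∀ w ∈ C, w ∉ JJ x (k x) → w ∉ JJ (k x) (k (k x)) →
      ((⁅h, k⁆ : Equiv.Perm ℝ) w = w ∧ (⁅h, k⁆⁻¹ : Equiv.Perm ℝ) w = w) := by
    intro w hwC hw0 hw1
    have hkwC : k⁻¹ w ∈ C := (hCinv w hwC).2
    have hkw0 : k⁻¹ w ∉ JJ x (k x) := fun hc => hw1 ((m0 w).2 hc)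
    constructor
    · rw [g_apply, hfix' _ hkwC hkw0, Equiv.Perm.apply_inv_self]
      exact hfix _ hwC hw0
    · rw [ginv_apply, hfix' _ hwC hw0, hfix _ hkwC hkw0, Equiv.Perm.apply_inv_self]
  have ggJ0 : ∀ w ∈ C, w ∈ JJ x (k x) →
      ((⁅h, k⁆ : Equiv.Perm ℝ) w = h w ∧ (⁅h, k⁆⁻¹ : Equiv.Perm ℝ) w = h⁻¹ w) := by
    intro w hwC hw0
    have hkwC : k⁻¹ w ∈ C := (hCinv w hwC).2
    have hkwm : k⁻¹ w ∈ JJ (k⁻¹ x) x := (m2 w).1 hw0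
    have hkw0 : k⁻¹ w ∉ JJ x (k x) := dJm0 _ hkwm
    constructor
    · rw [g_apply, hfix' _ hkwC hkw0, Equiv.Perm.apply_inv_self]
    · rw [ginv_apply]
      have hhw : h⁻¹ w ∈ JJ x (k x) := (hmap w hwC hw0).2
      have hhwC : h⁻¹ w ∈ C := hJ0C hhw
      have h5 : k⁻¹ (h⁻¹ w) ∈ JJ (k⁻¹ x) x := (m2 _).1 hhw
      have h6 : k⁻¹ (h⁻¹ w) ∉ JJ x (k x) := dJm0 _ h5
      rw [hfix _ ((hCinv _ hhwC).2) h6, Equiv.Perm.apply_inv_self]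
  have ggJ1 : ∀ w ∈ C, w ∈ JJ (k x) (k (k x)) →
      ((⁅h, k⁆ : Equiv.Perm ℝ) w ∈ JJ (k x) (k (k x)) ∧
       (⁅h, k⁆⁻¹ : Equiv.Perm ℝ) w ∈ JJ (k x) (k (k x))) := by
    intro w hwC hw1
    have hkw0 : k⁻¹ w ∈ JJ x (k x) := (m0 w).1 hw1
    have hkwC : k⁻¹ w ∈ C := (hCinv w hwC).2
    constructor
    · have h5 : h⁻¹ (k⁻¹ w) ∈ JJ x (k x) := (hmap _ hkwC hkw0).2
      have h6 : k (h⁻¹ (k⁻¹ w)) ∈ JJ (k x) (k (k x)) := (m4 _).1 h5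
      have h7 : k (h⁻¹ (k⁻¹ w)) ∈ C := hJ1C h6
      rw [g_apply, hfix _ h7 (d10 _ h6)]
      exact h6
    · have h5 : h⁻¹ w = w := hfix' _ hwC (d10 _ hw1)
      have h6 : h (k⁻¹ w) ∈ JJ x (k x) := (hmap _ hkwC hkw0).1
      rw [ginv_apply, h5]
      exact (m4 _).1 h6
  refine ⟨?_, ?_, ex1, ex2, ex3, ex4⟩
  · intro y hyC hy0 hy1 hy2
    have hkyC : k⁻¹ y ∈ C := (hCinv y hyC).2
    have hky0 : k⁻¹ y ∉ JJ x (k x) := fun hc => hy1 ((m0 y).2 hc)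
    have hky1 : k⁻¹ y ∉ JJ (k x) (k (k x)) := fun hc => hy2 ((m1 y).2 hc)
    rw [f_apply, (ggfix _ hkyC hky0 hky1).2, Equiv.Perm.apply_inv_self]
    exact (ggfix _ hyC hy0 hy1).1
  · intro y hyC hy0
    have hkyC : k⁻¹ y ∈ C := (hCinv y hyC).2
    have hkym : k⁻¹ y ∈ JJ (k⁻¹ x) x := (m2 y).1 hy0
    rw [f_apply, (ggfix _ hkyC (dJm0 _ hkym) (dJm1 _ hkym)).2, Equiv.Perm.apply_inv_self]
    exact (ggJ0 _ hyC hy0).1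

end Stmt16Aux
namespace Stmt16Aux

lemma compB (h k : Equiv.Perm ℝ) (hhs : StrictMono ⇑h) {A : Set ℝ} {x : ℝ}
    (hxA : x ∈ A)
    (hAinv : ∀ y ∈ A, h y ∈ A ∧ h⁻¹ y ∈ A)
    (hhmov : h x ≠ x)
    (hAord : A.OrdConnected)
    (hfix : ∀ y ∈ A, y ∉ JJ x (h x) → k y = y)
    (hmap : ∀ y ∈ A, y ∈ JJ x (h x) → k y ∈ JJ x (h x) ∧ k⁻¹ y ∈ JJ x (h x)) :
    ∀ y ∈ A, (⁅⁅h, k⁆, k⁆ : Equiv.Perm ℝ) y = y := by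
  have hchain : (h⁻¹ x < x ∧ x < h x ∧ h x < h (h x)) ∨
      (h (h x) < h x ∧ h x < x ∧ x < h⁻¹ x) := by
    rcases hhmov.lt_or_gt with h1|h1
    · right
      refine ⟨hhs h1, h1, ?_⟩
      have h2 : h x < h (h⁻¹ x) := by simpa using h1
      exact hhs.lt_iff_lt.1 h2
    · left
      refine ⟨?_, h1, hhs h1⟩
      have h2 : h (h⁻¹ x) < h x := by simpa using h1
      exact hhs.lt_iff_lt.1 h2
  have dIm0 : ∀ w ∈ JJ (h⁻¹ x) x, w ∉ JJ x (h x) := by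
    apply JJ_disj_of
    rcases hchain with ⟨h1,h2,h3⟩|⟨h1,h2,h3⟩
    · left; rw [max_eq_right h1.le, min_eq_left h2.le]
    · right; rw [max_eq_left h2.le, min_eq_right h3.le]
  have d10 : ∀ w ∈ JJ (h x) (h (h x)), w ∉ JJ x (h x) := by
    apply JJ_disj_of
    rcases hchain with ⟨h1,h2,h3⟩|⟨h1,h2,h3⟩
    · right; rw [max_eq_right h2.le, min_eq_left h3.le]
    · left; rw [max_eq_left h1.le, min_eq_right h2.le]
  have hhxA : h x ∈ A := (hAinv x hxA).1
  have hhhxA : h (h x) ∈ A := (hAinv _ hhxA).1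
  have hhixA : h⁻¹ x ∈ A := (hAinv x hxA).2
  have hImA : JJ (h⁻¹ x) x ⊆ A := JJ_sub hAord hhixA hxA
  have hI0A : JJ x (h x) ⊆ A := JJ_sub hAord hxA hhxA
  have hI1A : JJ (h x) (h (h x)) ⊆ A := JJ_sub hAord hhxA hhhxA
  have n0 : ∀ w, w ∈ JJ (h x) (h (h x)) ↔ h⁻¹ w ∈ JJ x (h x) := fun w => mapJJ' h hhs x (h x) w
  have n2 : ∀ w, w ∈ JJ x (h x) ↔ h⁻¹ w ∈ JJ (h⁻¹ x) x := by
    intro w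
    have := mapJJ' h hhs (h⁻¹ x) x w
    simpa using this
  have n4 : ∀ w, w ∈ JJ x (h x) ↔ h w ∈ JJ (h x) (h (h x)) := fun w => (mapJJ h hhs x (h x) w).symm
  have kfix' : ∀ w ∈ A, w ∉ JJ x (h x) → k⁻¹ w = w := fun w hw h2 => fix_inv k (hfix w hw h2)
  have gI0 : ∀ w ∈ A, w ∈ JJ x (h x) →
      ((⁅h, k⁆ : Equiv.Perm ℝ) w = k⁻¹ w ∧ (⁅h, k⁆⁻¹ : Equiv.Perm ℝ) w = k w) := by
    intro w hwA hw0
    have hkw0 : k⁻¹ w ∈ JJ x (h x) := (hmap w hwA hw0).2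
    have h5 : h⁻¹ (k⁻¹ w) ∈ JJ (h⁻¹ x) x := (n2 _).1 hkw0
    have h5A : h⁻¹ (k⁻¹ w) ∈ A := hImA h5
    have h6 : h⁻¹ w ∈ JJ (h⁻¹ x) x := (n2 _).1 hw0
    have h6A : h⁻¹ w ∈ A := hImA h6
    constructor
    · rw [g_apply, hfix _ h5A (dIm0 _ h5), Equiv.Perm.apply_inv_self]
    · rw [ginv_apply, kfix' _ h6A (dIm0 _ h6), Equiv.Perm.apply_inv_self]
  have gI1 : ∀ w ∈ A, w ∈ JJ (h x) (h (h x)) →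
      ((⁅h, k⁆ : Equiv.Perm ℝ) w = h (k (h⁻¹ w)) ∧
       (⁅h, k⁆⁻¹ : Equiv.Perm ℝ) w = h (k⁻¹ (h⁻¹ w))) := by
    intro w hwA hw1
    have hw0 : w ∉ JJ x (h x) := d10 _ hw1
    have hhw : h⁻¹ w ∈ JJ x (h x) := (n0 _).1 hw1
    have hhwA : h⁻¹ w ∈ A := hI0A hhw
    constructor
    · rw [g_apply, kfix' _ hwA hw0]
    · have h5 : k⁻¹ (h⁻¹ w) ∈ JJ x (h x) := (hmap _ hhwA hhw).2
      have h6 : h (k⁻¹ (h⁻¹ w)) ∈ JJ (h x) (h (h x)) := (n4 _).1 h5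
      rw [ginv_apply, hfix _ (hI1A h6) (d10 _ h6)]
  have gfixB : ∀ w ∈ A, w ∉ JJ x (h x) → w ∉ JJ (h x) (h (h x)) →
      ((⁅h, k⁆ : Equiv.Perm ℝ) w = w ∧ (⁅h, k⁆⁻¹ : Equiv.Perm ℝ) w = w) := by
    intro w hwA hw0 hw1
    have hhw0 : h⁻¹ w ∉ JJ x (h x) := fun hc => hw1 ((n0 w).2 hc)
    have hhwA : h⁻¹ w ∈ A := (hAinv w hwA).2
    constructor
    · rw [g_apply, kfix' _ hwA hw0, hfix _ hhwA hhw0, Equiv.Perm.apply_inv_self]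
    · rw [ginv_apply, kfix' _ hhwA hhw0, Equiv.Perm.apply_inv_self]
      exact hfix _ hwA hw0
  intro y hyA
  by_cases hy0 : y ∈ JJ x (h x)
  · have hky0 : k⁻¹ y ∈ JJ x (h x) := (hmap y hyA hy0).2
    have hkyA : k⁻¹ y ∈ A := hI0A hky0
    rw [f_apply, (gI0 _ hkyA hky0).2, Equiv.Perm.apply_inv_self]
    have hkyI : k y ∈ JJ x (h x) := (hmap y hyA hy0).1
    rw [(gI0 _ (hI0A hkyI) hkyI).1, Equiv.Perm.inv_apply_self]
  by_cases hy1 : y ∈ JJ (h x) (h (h x))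
  · have e1 : k⁻¹ y = y := kfix' _ hyA (d10 _ hy1)
    have hhy : h⁻¹ y ∈ JJ x (h x) := (n0 _).1 hy1
    have hhyA : h⁻¹ y ∈ A := hI0A hhy
    have h5 : k⁻¹ (h⁻¹ y) ∈ JJ x (h x) := (hmap _ hhyA hhy).2
    have h6 : h (k⁻¹ (h⁻¹ y)) ∈ JJ (h x) (h (h x)) := (n4 _).1 h5
    have h6A : h (k⁻¹ (h⁻¹ y)) ∈ A := hI1A h6
    rw [f_apply, e1, (gI1 _ hyA hy1).2, hfix _ h6A (d10 _ h6), (gI1 _ h6A h6).1,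
      Equiv.Perm.inv_apply_self, Equiv.Perm.apply_inv_self, Equiv.Perm.apply_inv_self]
  · have e1 : k⁻¹ y = y := kfix' _ hyA hy0
    rw [f_apply, e1, (gfixB _ hyA hy0 hy1).2, hfix _ hyA hy0]
    exact (gfixB _ hyA hy0 hy1).1

lemma compC (h k : Equiv.Perm ℝ) {C : Set ℝ}
    (hCinv : ∀ y ∈ C, k y ∈ C ∧ k⁻¹ y ∈ C)
    (hfixh : ∀ y ∈ C, h y = y) :
    ∀ y ∈ C, (⁅⁅h, k⁆, k⁆ : Equiv.Perm ℝ) y = y := by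
  have hfixh' : ∀ y ∈ C, h⁻¹ y = y := fun y hy => fix_inv h (hfixh y hy)
  have hg : ∀ w ∈ C, ((⁅h, k⁆ : Equiv.Perm ℝ) w = w ∧ (⁅h, k⁆⁻¹ : Equiv.Perm ℝ) w = w) := by
    intro w hw
    have hkw : k⁻¹ w ∈ C := (hCinv w hw).2
    constructor
    · rw [g_apply, hfixh' _ hkw, Equiv.Perm.apply_inv_self, hfixh _ hw]
    · rw [ginv_apply, hfixh' _ hw, hfixh _ hkw, Equiv.Perm.apply_inv_self]
  intro y hy
  have hky : k⁻¹ y ∈ C := (hCinv y hy).2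
  rw [f_apply, (hg _ hky).2, Equiv.Perm.apply_inv_self]
  exact (hg _ hy).1

lemma compC' (h k : Equiv.Perm ℝ) {A : Set ℝ}
    (hAinv : ∀ y ∈ A, h y ∈ A ∧ h⁻¹ y ∈ A)
    (hfixk : ∀ y ∈ A, k y = y) :
    ∀ y ∈ A, (⁅⁅h, k⁆, k⁆ : Equiv.Perm ℝ) y = y := by
  have hfixk' : ∀ y ∈ A, k⁻¹ y = y := fun y hy => fix_inv k (hfixk y hy)
  have hg : ∀ w ∈ A, ((⁅h, k⁆ : Equiv.Perm ℝ) w = w ∧ (⁅h, k⁆⁻¹ : Equiv.Perm ℝ) w = w) := by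
    intro w hw
    have hhw : h⁻¹ w ∈ A := (hAinv w hw).2
    constructor
    · rw [g_apply, hfixk' _ hw, hfixk _ hhw, Equiv.Perm.apply_inv_self]
    · rw [ginv_apply, hfixk' _ hhw, Equiv.Perm.apply_inv_self, hfixk _ hw]
  intro y hy
  rw [f_apply, hfixk' _ hy, (hg _ hy).2, hfixk _ hy]
  exact (hg _ hy).1

end Stmt16Aux
namespace Stmt16Aux

lemma eq_of_locally_eq {s : Set ℝ} (hso : IsOpen s) (hs : IsPreconnected s)
    (F : ℝ → ℝ × ℝ) (hloc : ∀ x ∈ s, ∀ᶠ z in nhds x, F z = F x) :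
    ∀ x ∈ s, ∀ y ∈ s, F x = F y := by
  intro x hx y hy
  by_contra hne
  set t := {z | z ∈ s ∧ F z = F x} with ht
  set u := {z | z ∈ s ∧ F z ≠ F x} with hu
  have hto : IsOpen t := by
    rw [isOpen_iff_mem_nhds]
    rintro z ⟨hzs, hzF⟩
    have h1 := hloc z hzs
    have h2 := hso.mem_nhds hzs
    filter_upwards [h1, h2] with w hw1 hw2
    exact ⟨hw2, hw1.trans hzF⟩
  have huo : IsOpen u := by
    rw [isOpen_iff_mem_nhds]
    rintro z ⟨hzs, hzF⟩
    have h1 := hloc z hzs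
    have h2 := hso.mem_nhds hzs
    filter_upwards [h1, h2] with w hw1 hw2
    exact ⟨hw2, fun hc => hzF (hw1.symm.trans hc)⟩
  have hcover : s ⊆ t ∪ u := by
    intro z hz
    by_cases hc : F z = F x
    · exact Or.inl ⟨hz, hc⟩
    · exact Or.inr ⟨hz, hc⟩
  obtain ⟨z, hz⟩ := hs t u hto huo hcover ⟨x, hx, hx, rfl⟩ ⟨y, hy, hy, fun hc => hne hc.symm⟩
  exact hz.2.2.2 hz.2.1.2

lemma deriv_affine (m b z : ℝ) : deriv (fun w => m * w + b) z = m := by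
  have h1 : HasDerivAt (fun w => m * w + b) m z := by
    simpa using ((hasDerivAt_id z).const_mul m).add_const b
  exact h1.deriv

lemma germ_affine (g : Equiv.Perm ℝ) (hsm : StrictMono ⇑g) (hpl : IsPL ⇑g) {c : ℝ}
    (hc : g c = c) : ∃ δ > 0, ∃ s > 0, ∀ y ∈ Set.Ioo c (c + δ), g y = c + s * (y - c) := by
  classical
  obtain ⟨m, hmc, hm⟩ : ∃ m, c < m ∧ ∀ t ∈ {x | ¬ LocallyAffineAt ⇑g x}, t ∉ Set.Ioo c m := by
    by_cases hne : ({x | ¬ LocallyAffineAt ⇑g x} ∩ Set.Ioi c).Nonempty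
    · obtain ⟨t0, ht0, hmin⟩ := Set.exists_min_image _ id (hpl.inter_of_left _) hne
      refine ⟨t0, ht0.2, ?_⟩
      intro t ht hti
      have : t0 ≤ t := hmin t ⟨ht, hti.1⟩
      linarith [hti.2]
    · refine ⟨c + 1, by linarith, ?_⟩
      intro t ht hti
      exact hne ⟨t, ht, hti.1⟩
  have hla : ∀ y ∈ Set.Ioo c m, LocallyAffineAt ⇑g y := by
    intro y hy
    by_contra hc2
    exact hm y hc2 hy
  set F : ℝ → ℝ × ℝ := fun y => (deriv ⇑g y, g y - deriv ⇑g y * y) with hF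
  have hloc : ∀ y ∈ Set.Ioo c m, (∀ᶠ z in nhds y, F z = F y) ∧ g y = (F y).1 * y + (F y).2 := by
    intro y hy
    obtain ⟨ε, hε, mm, bb, haff⟩ := hla y hy
    have hkey : ∀ z, |z - y| < ε → F z = (mm, bb) := by
      intro z hz
      have hev : ⇑g =ᶠ[nhds z] (fun w => mm * w + bb) := by
        have : Set.Ioo (y - ε) (y + ε) ∈ nhds z := by
          apply Ioo_mem_nhds <;> cases' abs_lt.1 hz with q1 q2 <;> linarith
        filter_upwards [this] with w hw
        apply haff
        rw [abs_lt]
        cases' hw with q1 q2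
        constructor <;> linarith
      have hd : deriv ⇑g z = mm := by
        rw [hev.deriv_eq, deriv_affine]
      have hgz : g z = mm * z + bb := haff z hz
      rw [hF]
      simp only [hd, hgz, Prod.mk.injEq]
      exact ⟨trivial, by ring⟩
    have hFy : F y = (mm, bb) := hkey y (by simpa using hε)
    constructor
    · have : Set.Ioo (y - ε) (y + ε) ∈ nhds y := by apply Ioo_mem_nhds <;> linarith
      filter_upwards [this] with w hw
      rw [hkey w (by rw [abs_lt]; cases' hw with q1 q2; constructor <;> linarith), hFy]
    · rw [hFy]
      exact haff y (by simpa using hε)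
  have hconst := eq_of_locally_eq isOpen_Ioo isPreconnected_Ioo F
    (fun z hz => (hloc z hz).1)
  set y0 := (c + m)/2 with hy0
  have hy0m : y0 ∈ Set.Ioo c m := by constructor <;> (rw [hy0]; linarith)
  set s := (F y0).1 with hs
  set b0 := (F y0).2 with hb0
  have haffall : ∀ y ∈ Set.Ioo c m, g y = s * y + b0 := by
    intro y hy
    have h1 := (hloc y hy).2
    rw [hconst y hy y0 hy0m] at h1
    exact h1
  have hspos : s > 0 := by
    have h1 : g ((3*c + m)/4) < g y0 := by
      apply hsm
      rw [hy0]; linarith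
    rw [haffall _ (by constructor <;> linarith), haffall _ hy0m, hy0] at h1
    nlinarith
  have hb0e : b0 = c - s * c := by
    have t1 : Filter.Tendsto (⇑g) (nhdsWithin c (Set.Ioi c)) (nhds c) := by
      have h : ContinuousWithinAt (⇑g) (Set.Ioi c) c :=
        (cont_of_sm g hsm).continuousWithinAt
      have h2 : Filter.Tendsto (⇑g) (nhdsWithin c (Set.Ioi c)) (nhds (g c)) := h
      rwa [hc] at h2
    have t2 : Filter.Tendsto (fun y => s * y + b0) (nhdsWithin c (Set.Ioi c))
        (nhds (s * c + b0)) := by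
      apply Filter.Tendsto.mono_left _ nhdsWithin_le_nhds
      exact (((continuous_const.mul continuous_id).add continuous_const).tendsto c)
    have hev : ⇑g =ᶠ[nhdsWithin c (Set.Ioi c)] (fun y => s * y + b0) := by
      filter_upwards [Ioo_mem_nhdsGT_of_mem (Set.left_mem_Ico.2 hmc)] with w hw
      exact haffall w hw
    have t3 : Filter.Tendsto (⇑g) (nhdsWithin c (Set.Ioi c)) (nhds (s * c + b0)) :=
      t2.congr' hev.symm
    have := tendsto_nhds_unique t1 t3
    linarith
  refine ⟨m - c, by linarith, s, hspos, ?_⟩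
  intro y hy
  have : y ∈ Set.Ioo c m := by cases' hy with q1 q2; constructor <;> linarith
  rw [haffall y this, hb0e]
  ring

lemma inv_affine (g : Equiv.Perm ℝ) {c δ s : ℝ} (hδ : δ > 0) (hs : s > 0)
    (haff : ∀ y ∈ Set.Ioo c (c + δ), g y = c + s * (y - c)) :
    ∀ y ∈ Set.Ioo c (c + δ * s), g⁻¹ y = c + s⁻¹ * (y - c) := by
  intro y hy
  have hz : c + s⁻¹ * (y - c) ∈ Set.Ioo c (c + δ) := by
    cases' hy with q1 q2
    constructor
    · have : s⁻¹ * (y - c) > 0 := mul_pos (inv_pos.2 hs) (by linarith)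
      linarith
    · have h3 : s⁻¹ * (y - c) < s⁻¹ * (δ * s) := by
        apply mul_lt_mul_of_pos_left _ (by positivity)
        linarith
      have h4 : s⁻¹ * (δ * s) = δ := by field_simp
      rw [h4] at h3
      linarith
  have := haff _ hz
  have h2 : g (c + s⁻¹ * (y - c)) = y := by
    rw [this, show c + s⁻¹ * (y - c) - c = s⁻¹ * (y - c) by ring, ← mul_assoc,
      mul_inv_cancel₀ (ne_of_gt hs), one_mul]
    ring
  have := congrArg (⇑g⁻¹) h2
  simpa using this.symm

end Stmt16Aux
namespace Stmt16Aux

set_option maxHeartbeats 1000000 in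
lemma germ_fix (h k : Equiv.Perm ℝ) (hhs : StrictMono ⇑h) (hks : StrictMono ⇑k)
    (hph : IsPL ⇑h) (hpk : IsPL ⇑k) {c : ℝ} (hhc : h c = c) (hkc : k c = c) :
    ∃ δ > 0, ∀ y ∈ Set.Ioo c (c + δ), (⁅⁅h, k⁆, k⁆ : Equiv.Perm ℝ) y = y := by
  obtain ⟨δ₁, hδ₁, a, ha, Ha⟩ := germ_affine h hhs hph hhc
  obtain ⟨δ₂, hδ₂, b, hb, Hb⟩ := germ_affine k hks hpk hkc
  obtain ⟨δ, hδ, hδm1, hδm2⟩ : ∃ δ, 0 < δ ∧ δ ≤ δ₁ ∧ δ ≤ δ₂ :=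
    ⟨min δ₁ δ₂, lt_min hδ₁ hδ₂, min_le_left _ _, min_le_right _ _⟩
  have Ha0 : ∀ y ∈ Set.Ioo c (c + δ), h y = c + a * (y - c) := by
    intro y hy; exact Ha y ⟨hy.1, by linarith [hy.2]⟩
  have Hb0 : ∀ y ∈ Set.Ioo c (c + δ), k y = c + b * (y - c) := by
    intro y hy; exact Hb y ⟨hy.1, by linarith [hy.2]⟩
  have Hai := inv_affine h hδ ha Ha0
  have Hbi := inv_affine k hδ hb Hb0
  obtain ⟨m0, hm0, hm01, hm0a, hm0b⟩ : ∃ m, 0 < m ∧ m ≤ 1 ∧ m ≤ a ∧ m ≤ b :=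
    ⟨min 1 (min a b), lt_min one_pos (lt_min ha hb), min_le_left _ _,
      le_trans (min_le_right _ _) (min_le_left _ _),
      le_trans (min_le_right _ _) (min_le_right _ _)⟩
  have hm0sq : m0 * m0 ≤ 1 := by nlinarith [mul_nonneg (sub_nonneg.2 hm01) hm0.le]
  have hm0c : m0 * m0 * m0 ≤ m0 := by nlinarith [mul_nonneg (sub_nonneg.2 hm0sq) hm0.le]
  have hm0c1 : m0 * m0 * m0 ≤ 1 := le_trans hm0c hm01
  have hm0sqle : m0 * m0 * m0 ≤ m0 * m0 := by
    nlinarith [mul_nonneg (mul_nonneg hm0.le hm0.le) (sub_nonneg.2 hm01)]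
  obtain ⟨ρ0, hρ0, hρ0δ, hρ0a, hρ0b⟩ :
      ∃ ρ, 0 < ρ ∧ ρ ≤ δ ∧ ρ ≤ δ * a ∧ ρ ≤ δ * b := by
    refine ⟨δ * (m0 * m0), by positivity, ?_, ?_, ?_⟩
    · nlinarith [mul_nonneg hδ.le (sub_nonneg.2 hm0sq)]
    · have hma : m0 * m0 ≤ a := le_trans (by nlinarith [mul_nonneg (sub_nonneg.2 hm01) hm0.le]) hm0a
      nlinarith [mul_nonneg hδ.le (sub_nonneg.2 hma)]
    · have hmb : m0 * m0 ≤ b := le_trans (by nlinarith [mul_nonneg (sub_nonneg.2 hm01) hm0.le]) hm0b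
      nlinarith [mul_nonneg hδ.le (sub_nonneg.2 hmb)]
  have Lh : ∀ t, 0 < t → t < ρ0 → h (c + t) = c + a * t := by
    intro t h1 h2
    rw [Ha0 (c + t) ⟨by linarith, by linarith⟩]
    ring_nf
  have Lk : ∀ t, 0 < t → t < ρ0 → k (c + t) = c + b * t := by
    intro t h1 h2
    rw [Hb0 (c + t) ⟨by linarith, by linarith⟩]
    ring_nf
  have Lhi : ∀ t, 0 < t → t < ρ0 → h⁻¹ (c + t) = c + a⁻¹ * t := by
    intro t h1 h2
    rw [Hai (c + t) ⟨by linarith, by linarith⟩]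
    ring_nf
  have Lki : ∀ t, 0 < t → t < ρ0 → k⁻¹ (c + t) = c + b⁻¹ * t := by
    intro t h1 h2
    rw [Hbi (c + t) ⟨by linarith, by linarith⟩]
    ring_nf
  obtain ⟨δ', hδ'pos, hδ'le⟩ : ∃ d, 0 < d ∧ d ≤ ρ0 * (m0 * m0 * m0) :=
    ⟨ρ0 * (m0 * m0 * m0), by positivity, le_refl _⟩
  have hδ'ρ : δ' ≤ ρ0 := le_trans hδ'le (by nlinarith [mul_nonneg hρ0.le (sub_nonneg.2 hm0c1)])
  refine ⟨δ', hδ'pos, ?_⟩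
  rintro y ⟨hy1, hy2⟩
  obtain ⟨ε, hε, hε2, rfl⟩ : ∃ ε, 0 < ε ∧ ε < δ' ∧ y = c + ε :=
    ⟨y - c, by linarith, by linarith, by ring⟩
  have hερ : ε < ρ0 := lt_of_lt_of_le hε2 hδ'ρ
  have hwin : ∀ Q : ℝ, m0 * m0 * m0 ≤ Q → 0 < ε / Q ∧ ε / Q < ρ0 := by
    intro Q hQ
    have hQ0 : 0 < Q := lt_of_lt_of_le (by positivity) hQ
    constructor
    · positivity
    · have h1 : ε / Q ≤ ε / (m0 * m0 * m0) := by
        rw [div_le_div_iff₀ hQ0 (by positivity)]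
        nlinarith [mul_nonneg hε.le (sub_nonneg.2 hQ)]
      have h2 : ε / (m0 * m0 * m0) < ρ0 := by
        rw [div_lt_iff₀ (by positivity)]
        exact lt_of_lt_of_le hε2 hδ'le
      linarith
  have hab : m0 * m0 ≤ a * b := mul_le_mul hm0a hm0b hm0.le ha.le
  have hbb : m0 * m0 ≤ b * b := mul_le_mul hm0b hm0b hm0.le hb.le
  have hqb : m0 * m0 * m0 ≤ b := le_trans hm0c hm0b
  have hqa : m0 * m0 * m0 ≤ a := le_trans hm0c hm0a
  have hqab : m0 * m0 * m0 ≤ a * b := le_trans hm0sqle hab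
  have hqbb : m0 * m0 * m0 ≤ b * b := le_trans hm0sqle hbb
  have hqabb : m0 * m0 * m0 ≤ a * b * b :=
    le_trans (by nlinarith [mul_nonneg (mul_nonneg hm0.le hm0.le) hm0.le] :
        m0 * m0 * m0 ≤ (m0 * m0) * m0)
      (mul_le_mul hab hm0b hm0.le (by positivity))
  have hane := ne_of_gt ha
  have hbne := ne_of_gt hb
  have c1 : b⁻¹ * ε = ε / b := by field_simp
  have c2 : a⁻¹ * (ε / b) = ε / (a * b) := by field_simp
  have c3 : b⁻¹ * (ε / (a * b)) = ε / (a * b * b) := by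
    rw [inv_mul_eq_div, div_div]
  have c4 : a * (ε / (a * b * b)) = ε / (b * b) := by
    field_simp
  have c5 : b * (ε / (b * b)) = ε / b := by
    field_simp
  have c6 : b * (ε / b) = ε := by field_simp
  have c7 : b * (ε / (a * b)) = ε / a := by
    field_simp
  have c8 : a * (ε / a) = ε := by field_simp
  have e1 : k⁻¹ (c + ε) = c + ε / b := by rw [Lki ε hε hερ, c1]
  have e2 : h⁻¹ (c + ε / b) = c + ε / (a * b) := by
    rw [Lhi _ (hwin b hqb).1 (hwin b hqb).2, c2]
  have e3 : k⁻¹ (c + ε / (a * b)) = c + ε / (a * b * b) := by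
    rw [Lki _ (hwin _ hqab).1 (hwin _ hqab).2, c3]
  have e4 : h (c + ε / (a * b * b)) = c + ε / (b * b) := by
    rw [Lh _ (hwin _ hqabb).1 (hwin _ hqabb).2, c4]
  have e5 : k (c + ε / (b * b)) = c + ε / b := by
    rw [Lk _ (hwin _ hqbb).1 (hwin _ hqbb).2, c5]
  have e6 : k (c + ε / b) = c + ε := by
    rw [Lk _ (hwin _ hqb).1 (hwin _ hqb).2, c6]
  have e7 : k (c + ε / (a * b)) = c + ε / a := by
    rw [Lk _ (hwin _ hqab).1 (hwin _ hqab).2, c7]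
  have e8 : h (c + ε / a) = c + ε := by
    rw [Lh _ (hwin _ hqa).1 (hwin _ hqa).2, c8]
  rw [f_apply, e1, ginv_apply, e2, e3, e4, e5, e6, g_apply, e1, e2, e7, e8]

end Stmt16Aux
open Stmt16Aux in
theorem stmt16 (H : Subgroup (Equiv.Perm ℝ)) (hH : ∀ g ∈ H, PLHomeo g)
    (hnc : ¬ HasTransitionChain2 H) (h k : Equiv.Perm ℝ) (hh : h ∈ H) (hk : k ∈ H)
    (hme : MutualEff h k) :
    (∀ A C : Set ℝ, IsOrbital ⇑h A → IsOrbital ⇑k C → A ⊂ C → IsOrbital ⇑⁅⁅h, k⁆, k⁆ A) ∧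
    (∀ B : Set ℝ, IsOrbital ⇑⁅⁅h, k⁆, k⁆ B →
      ∃ C, IsOrbital ⇑k C ∧ B ⊂ C ∧ ∃ A, IsOrbital ⇑h A ∧ A ⊆ C) := by
  obtain ⟨hme1, hme2⟩ := hme
  obtain ⟨⟨hhs, hho⟩, hhp⟩ := hH h hh
  obtain ⟨⟨hks, hko⟩, hkp⟩ := hH k hk
  have hgH : ⁅h, k⁆ ∈ H := by
    rw [commutatorElement_def]
    exact mul_mem (mul_mem (mul_mem hh hk) (inv_mem hh)) (inv_mem hk)
  have hfH : ⁅⁅h, k⁆, k⁆ ∈ H := by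
    rw [commutatorElement_def]
    exact mul_mem (mul_mem (mul_mem hgH hk) (inv_mem hgH)) (inv_mem hk)
  obtain ⟨⟨hfs, hfo⟩, hfp⟩ := hH _ hfH
  constructor
  · -- Part 1
    intro A C hA hC hAC
    obtain ⟨x, hxC, hS⟩ := hme2 C hC ⟨A, hA, hAC⟩
    obtain ⟨c₁, c₂, hc12, hCeq, hkc₁, hkc₂, hCmov, hCinv⟩ := orbital_structure k hks hko hC
    have hCord : C.OrdConnected := by rw [hCeq]; exact Set.ordConnected_Ioo
    have hnesth : ∀ A', IsOrbital ⇑h A' → (A' ∩ C).Nonempty → A' ⊆ C ∨ C ⊆ A' :=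
      fun A' hA' hint => nested H hH hnc hh hk hA' hC hint
    obtain ⟨hfix, hmapJ, hnotC⟩ := setup h k hhs hho hks hko hC hxC hS hnesth
    obtain ⟨fA1, fA2, fex1, fex2, fex3, fex4⟩ :=
      compA h k hks hxC hCinv (hCmov x hxC) hCord hfix hmapJ
    obtain ⟨a₁, a₂, ha12, hAeq, hha₁, hha₂, hAmov, hAinv⟩ := orbital_structure h hhs hho hA
    have hAJ0 : A ⊆ JJ x (k x) := by
      intro y hy
      by_contra hc
      exact hAmov y hy (hfix y (hAC.subset hy) hc)
    have hsub2 : Set.Ioo a₁ a₂ ⊆ Set.Ioo (min x (k x)) (max x (k x)) := by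
      rw [← hAeq]; exact hAJ0
    have hend := (Set.Ioo_subset_Ioo_iff ha12).1 hsub2
    have hkxC : k x ∈ C := (hCinv x hxC).1
    have hmnC : min x (k x) ∈ C := by
      rcases min_cases x (k x) with ⟨he, -⟩|⟨he, -⟩ <;> rw [he] <;> assumption
    have hmxC : max x (k x) ∈ C := by
      rcases max_cases x (k x) with ⟨he, -⟩|⟨he, -⟩ <;> rw [he] <;> assumption
    have ha₁C : a₁ ∈ C := hCord.out hmnC hmxC ⟨hend.1, le_trans ha12.le hend.2⟩
    have ha₂C : a₂ ∈ C := hCord.out hmnC hmxC ⟨le_trans hend.1 ha12.le, hend.2⟩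
    have hbdryfix : ∀ w, w ∈ C → min x (k x) ≤ w → w ≤ max x (k x) → h w = w →
        (⁅⁅h, k⁆, k⁆ : Equiv.Perm ℝ) w = w := by
      intro w hwC hw1 hw2 hwh
      by_cases hc : w ∈ Set.Ioo (min x (k x)) (max x (k x))
      · rw [fA2 w hwC hc, hwh]
      · have hwe : w = min x (k x) ∨ w = max x (k x) := by
          rw [Set.mem_Ioo] at hc
          push_neg at hc
          rcases eq_or_lt_of_le hw1 with he|he
          · exact Or.inl he.symm
          · exact Or.inr (le_antisymm hw2 (hc he))
        have hJ1 : w ∉ JJ (k x) (k (k x)) := by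
          rcases hwe with he|he
          · rcases min_cases x (k x) with ⟨hm, -⟩|⟨hm, -⟩ <;> rw [he, hm] <;>
              first | exact fex1 | exact fex3
          · rcases max_cases x (k x) with ⟨hm, -⟩|⟨hm, -⟩ <;> rw [he, hm] <;>
              first | exact fex1 | exact fex3
        have hJ2 : w ∉ JJ (k (k x)) (k (k (k x))) := by
          rcases hwe with he|he
          · rcases min_cases x (k x) with ⟨hm, -⟩|⟨hm, -⟩ <;> rw [he, hm] <;>
              first | exact fex2 | exact fex4
          · rcases max_cases x (k x) with ⟨hm, -⟩|⟨hm, -⟩ <;> rw [he, hm] <;>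
              first | exact fex2 | exact fex4
        exact fA1 w hwC hc hJ1 hJ2
    have hfa₁ : (⁅⁅h, k⁆, k⁆ : Equiv.Perm ℝ) a₁ = a₁ :=
      hbdryfix a₁ ha₁C hend.1 (le_trans ha12.le hend.2) hha₁
    have hfa₂ : (⁅⁅h, k⁆, k⁆ : Equiv.Perm ℝ) a₂ = a₂ :=
      hbdryfix a₂ ha₂C (le_trans hend.1 ha12.le) hend.2 hha₂
    have hAsupp : ∀ y ∈ A, (⁅⁅h, k⁆, k⁆ : Equiv.Perm ℝ) y ≠ y := by
      intro y hy
      rw [fA2 y (hAC.subset hy) (hAJ0 hy)]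
      exact hAmov y hy
    have hy0A : (a₁ + a₂)/2 ∈ A := by
      rw [hAeq, Set.mem_Ioo]; constructor <;> linarith
    refine ⟨(a₁ + a₂)/2, hAsupp _ hy0A, ?_⟩
    apply Set.Subset.antisymm
    · have hpc : IsPreconnected A := by rw [hAeq]; exact isPreconnected_Ioo
      exact hpc.subset_connectedComponentIn hy0A (fun z hz => hAsupp z hz)
    · have hOC : (connectedComponentIn (Supp ⇑⁅⁅h, k⁆, k⁆) ((a₁ + a₂)/2)).OrdConnected :=
        (isPreconnected_connectedComponentIn).ordConnected
      have hcc := interval_confine hOC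
        (mem_connectedComponentIn (hAsupp _ hy0A))
        (by rw [← hAeq]; exact hy0A)
        (fun hc => (connectedComponentIn_subset _ _ hc) hfa₁)
        (fun hc => (connectedComponentIn_subset _ _ hc) hfa₂)
      rw [hAeq]
      exact hcc
  · -- Part 2
    intro B hB
    have hBsupp : B ⊆ Supp ⇑⁅⁅h, k⁆, k⁆ := by
      obtain ⟨zb, hzb, hBcomp⟩ := hB
      rw [hBcomp]
      exact connectedComponentIn_subset _ _
    obtain ⟨b₁, b₂, hb12, hBeq, -, -, hBmov, -⟩ :=
      orbital_structure (⁅⁅h, k⁆, k⁆) hfs hfo hB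
    have hy0B : (b₁ + b₂)/2 ∈ B := by
      rw [hBeq, Set.mem_Ioo]; constructor <;> linarith
    set y0 := (b₁ + b₂)/2 with hy0def
    have hy0S : (⁅⁅h, k⁆, k⁆ : Equiv.Perm ℝ) y0 ≠ y0 := hBmov y0 hy0B
    have hBord : B.OrdConnected := by rw [hBeq]; exact Set.ordConnected_Ioo
    by_cases hyk : k y0 = y0
    · -- y0 moved by h only: contradiction in every subcase
      exfalso
      have hyh : h y0 ≠ y0 := by
        intro hc
        exact hy0S (f_fix_of_fix h k hc hyk)
      obtain ⟨hA', hy0A'⟩ := orbital_mem h hyh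
      set A' := connectedComponentIn (Supp ⇑h) y0 with hA'def
      obtain ⟨α, β, hαβ, hA'eq, hhα, hhβ, hA'mov, hA'inv⟩ := orbital_structure h hhs hho hA'
      have hA'ord : A'.OrdConnected := by rw [hA'eq]; exact Set.ordConnected_Ioo
      by_cases hem : ∀ z ∈ A', k z = z
      · exact hy0S (compC' h k hA'inv hem y0 hy0A')
      · push_neg at hem
        obtain ⟨z, hzA', hzk⟩ := hem
        obtain ⟨hD, hzD⟩ := orbital_mem k hzk
        set D := connectedComponentIn (Supp ⇑k) z with hDdef
        rcases nested H hH hnc hk hh hD hA' ⟨z, hzD, hzA'⟩ with hsub|hsub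
        · by_cases heq : D = A'
          · have : y0 ∈ D := by rw [heq]; exact hy0A'
            exact (connectedComponentIn_subset _ _ this) hyk
          · obtain ⟨x, hxA', hS⟩ := hme1 A' hA' ⟨D, hD, ssubset_iff_subset_ne.2 ⟨hsub, heq⟩⟩
            have hnestk : ∀ D', IsOrbital ⇑k D' → (D' ∩ A').Nonempty → D' ⊆ A' ∨ A' ⊆ D' :=
              fun D' hD' hint => nested H hH hnc hk hh hD' hA' hint
            obtain ⟨qfix, qmap, -⟩ := setup k h hks hko hhs hho hA' hxA' hS hnestk
            exact hy0S (compB h k hhs hxA' hA'inv (hA'mov x hxA') hA'ord qfix qmap y0 hy0A')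
        · exact (connectedComponentIn_subset _ _ (hsub hy0A')) hyk
    · -- y0 in the support of k
      obtain ⟨hC, hy0C⟩ := orbital_mem k hyk
      set C := connectedComponentIn (Supp ⇑k) y0 with hCdef
      obtain ⟨c₁, c₂, hc12, hCeq, hkc₁, hkc₂, hCmov, hCinv⟩ := orbital_structure k hks hko hC
      have hCord : C.OrdConnected := by rw [hCeq]; exact Set.ordConnected_Ioo
      by_cases hem : ∀ z ∈ C, h z = z
      · exact absurd (compC h k hCinv hem y0 hy0C) hy0S
      push_neg at hem
      obtain ⟨z, hzC, hzh⟩ := hem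
      obtain ⟨hA', hzA'⟩ := orbital_mem h hzh
      set A' := connectedComponentIn (Supp ⇑h) z with hA'def
      obtain ⟨α, β, hαβ, hA'eq, hhα, hhβ, hA'mov, hA'inv⟩ := orbital_structure h hhs hho hA'
      have hA'ord : A'.OrdConnected := by rw [hA'eq]; exact Set.ordConnected_Ioo
      by_cases heqAC : A' = C
      · -- shared orbital: use the PL germ argument
        have hIooeq : Set.Ioo α β = Set.Ioo c₁ c₂ := by rw [← hA'eq, heqAC, hCeq]
        have he1 := (Set.Ioo_subset_Ioo_iff hαβ).1 (le_of_eq hIooeq)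
        have he2 := (Set.Ioo_subset_Ioo_iff hc12).1 (le_of_eq hIooeq.symm)
        have hαc : α = c₁ := le_antisymm (le_trans he2.1 (le_refl _)) he1.1
        have hβc : β = c₂ := le_antisymm he1.2 he2.2
        have hhc₁ : h c₁ = c₁ := by rw [← hαc]; exact hhα
        have hhc₂ : h c₂ = c₂ := by rw [← hβc]; exact hhβ
        obtain ⟨δ, hδ, hid⟩ := germ_fix h k hhs hks hhp hkp hhc₁ hkc₁
        set w := c₁ + min δ (c₂ - c₁) / 2 with hwdef
        have hwmin : 0 < min δ (c₂ - c₁) := lt_min hδ (by linarith)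
        have hw1 : w ∈ Set.Ioo c₁ (c₁ + δ) := by
          constructor
          · rw [hwdef]; linarith
          · rw [hwdef]; have := min_le_left δ (c₂ - c₁); linarith
        have hwC : w ∈ C := by
          rw [hCeq]
          constructor
          · rw [hwdef]; linarith
          · rw [hwdef]; have := min_le_right δ (c₂ - c₁); linarith
        have hfw := hid w hw1
        have hfc₁ : (⁅⁅h, k⁆, k⁆ : Equiv.Perm ℝ) c₁ = c₁ := f_fix_of_fix h k hhc₁ hkc₁
        have hfc₂ : (⁅⁅h, k⁆, k⁆ : Equiv.Perm ℝ) c₂ = c₂ := f_fix_of_fix h k hhc₂ hkc₂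
        have hBC : B ⊆ C := by
          rw [hCeq]
          exact interval_confine hBord hy0B (by rw [← hCeq]; exact hy0C)
            (fun hc => (hBsupp hc) hfc₁) (fun hc => (hBsupp hc) hfc₂)
        refine ⟨C, hC, ssubset_iff_subset_ne.2 ⟨hBC, ?_⟩, A', hA', heqAC.le⟩
        intro he
        have : w ∈ B := he ▸ hwC
        exact (hBsupp this) hfw
      · rcases nested H hH hnc hh hk hA' hC ⟨z, hzA', hzC⟩ with hsub|hsub
        · -- A' strictly inside C: the main case
          obtain ⟨x, hxC, hS⟩ := hme2 C hC ⟨A', hA', ssubset_iff_subset_ne.2 ⟨hsub, heqAC⟩⟩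
          have hnesth : ∀ A'', IsOrbital ⇑h A'' → (A'' ∩ C).Nonempty → A'' ⊆ C ∨ C ⊆ A'' :=
            fun A'' hA'' hint => nested H hH hnc hh hk hA'' hC hint
          obtain ⟨hfix, hmapJ, hnotC⟩ := setup h k hhs hho hks hko hC hxC hS hnesth
          obtain ⟨fA1, fA2, fex1, fex2, fex3, fex4⟩ :=
            compA h k hks hxC hCinv (hCmov x hxC) hCord hfix hmapJ
          have hbfix : ∀ w, w = c₁ ∨ w = c₂ → h w = w := by
            intro w hwor
            by_contra hc
            obtain ⟨hA'', hwA''⟩ := orbital_mem h hc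
            obtain ⟨α', β', hαβ', hA''eq, -, -, -, -⟩ := orbital_structure h hhs hho hA''
            have hwIoo : w ∈ Set.Ioo α' β' := by rw [← hA''eq]; exact hwA''
            have hint : ((connectedComponentIn (Supp ⇑h) w) ∩ C).Nonempty := by
              rcases hwor with he|he
              · refine ⟨(c₁ + min β' c₂)/2, ?_, ?_⟩
                · rw [hA''eq]
                  constructor
                  · have h1 : α' < c₁ := he ▸ hwIoo.1
                    have h2 : c₁ < min β' c₂ := lt_min (he ▸ hwIoo.2) hc12
                    linarith
                  · have h2 : c₁ < min β' c₂ := lt_min (he ▸ hwIoo.2) hc12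
                    have h3 : min β' c₂ ≤ β' := min_le_left _ _
                    linarith
                · rw [hCeq]
                  have h2 : c₁ < min β' c₂ := lt_min (he ▸ hwIoo.2) hc12
                  have h3 : min β' c₂ ≤ c₂ := min_le_right _ _
                  constructor <;> linarith
              · refine ⟨(max α' c₁ + c₂)/2, ?_, ?_⟩
                · rw [hA''eq]
                  constructor
                  · have h2 : max α' c₁ < c₂ := max_lt (he ▸ hwIoo.1) hc12
                    have h3 : α' ≤ max α' c₁ := le_max_left _ _
                    linarith
                  · have h1 : c₂ < β' := he ▸ hwIoo.2
                    have h2 : max α' c₁ < c₂ := max_lt (he ▸ hwIoo.1) hc12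
                    linarith
                · rw [hCeq]
                  have h2 : max α' c₁ < c₂ := max_lt (he ▸ hwIoo.1) hc12
                  have h3 : c₁ ≤ max α' c₁ := le_max_right _ _
                  constructor <;> linarith
            rcases hnesth _ hA'' hint with hs|hs
            · have : w ∈ C := hs hwA''
              rw [hCeq] at this
              rcases hwor with he|he <;> rw [he] at this
              · exact lt_irrefl _ this.1
              · exact lt_irrefl _ this.2
            · exact hnotC _ hA'' hs
          have hfc₁ : (⁅⁅h, k⁆, k⁆ : Equiv.Perm ℝ) c₁ = c₁ :=
            f_fix_of_fix h k (hbfix c₁ (Or.inl rfl)) hkc₁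
          have hfc₂ : (⁅⁅h, k⁆, k⁆ : Equiv.Perm ℝ) c₂ = c₂ :=
            f_fix_of_fix h k (hbfix c₂ (Or.inr rfl)) hkc₂
          have hBC : B ⊆ C := by
            rw [hCeq]
            exact interval_confine hBord hy0B (by rw [← hCeq]; exact hy0C)
              (fun hc => (hBsupp hc) hfc₁) (fun hc => (hBsupp hc) hfc₂)
          have hxJ0 : x ∉ Set.Ioo (min x (k x)) (max x (k x)) := by
            intro hc
            rcases le_total x (k x) with hle|hle
            · rw [min_eq_left hle] at hc; exact lt_irrefl _ hc.1
            · rw [max_eq_left hle] at hc; exact lt_irrefl _ hc.2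
          have hfx : (⁅⁅h, k⁆, k⁆ : Equiv.Perm ℝ) x = x := fA1 x hxC hxJ0 fex1 fex2
          refine ⟨C, hC, ssubset_iff_subset_ne.2 ⟨hBC, ?_⟩, A', hA', hsub⟩
          intro he
          exact (hBsupp (he ▸ hxC)) hfx
        · -- C strictly inside A': contradiction
          have hCA : C ⊂ A' := ssubset_iff_subset_ne.2 ⟨hsub, fun he => heqAC he.symm⟩
          obtain ⟨x, hxA', hS⟩ := hme1 A' hA' ⟨C, hC, hCA⟩
          have hnestk : ∀ D', IsOrbital ⇑k D' → (D' ∩ A').Nonempty → D' ⊆ A' ∨ A' ⊆ D' :=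
            fun D' hD' hint => nested H hH hnc hk hh hD' hA' hint
          obtain ⟨qfix, qmap, -⟩ := setup k h hks hko hhs hho hA' hxA' hS hnestk
          exact absurd (compB h k hhs hxA' hA'inv (hA'mov x hxA') hA'ord qfix qmap y0
            (hsub hy0C)) hy0S
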